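/- Consider the iteration z(k+1) = A^k z(k) - a_k d(k) in ℝ^N, where each A^k is row-stochastic with backward products Φ(k,s) → 1 q(s)^⊤ geometrically fast, the sequence d(k) is bounded, and a_k → 0. Then the disagreement z(k) - 1 q(k)^⊤ z(k) converges to 0 as k → ∞. -/
import Mathlib


open Filter Matrix

/-- Backward product `Φ(k,s) = A^k A^(k-1) ⋯ A^s` (identity if `k+1 ≤ s`). -/
def backProd {N : ℕ} (A : ℕ → Matrix (Fin N) (Fin N) ℝ) (k s : ℕ) :
    Matrix (Fin N) (Fin N) ℝ :=
  ((List.range (k + 1 - s)).map (fun i => A (k - i))).prod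


lemma backProd_self {N : ℕ} (A : ℕ → Matrix (Fin N) (Fin N) ℝ) (k : ℕ) :
    backProd A k k = A k := by
  have h1 : k + 1 - k = 1 := by omega
  unfold backProd
  rw [h1]
  simp [List.range_succ]

lemma backProd_empty {N : ℕ} (A : ℕ → Matrix (Fin N) (Fin N) ℝ) (k : ℕ) :
    backProd A k (k+1) = 1 := by
  simp [backProd]

lemma backProd_succ {N : ℕ} (A : ℕ → Matrix (Fin N) (Fin N) ℝ) (k s : ℕ) (h : s ≤ k + 1) :
    backProd A (k+1) s = A (k+1) * backProd A k s := by
  unfold backProd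
  have h1 : k + 1 + 1 - s = (k + 1 - s) + 1 := by omega
  rw [h1, List.range_succ_eq_map]
  simp only [List.map_cons, List.map_map, List.prod_cons, Nat.sub_zero]
  congr 2
  apply List.map_congr_left
  intro i _
  simp [Function.comp, Nat.succ_sub_succ]

theorem disagreement_tendsto_zero
    (N : ℕ) (hN : 0 < N) (A : ℕ → Matrix (Fin N) (Fin N) ℝ)
    (hnonneg : ∀ k n l, 0 ≤ A k n l)
    (hrow : ∀ k n, ∑ l, A k n l = 1)
    (q : ℕ → Fin N → ℝ)
    (hq : ∀ s, (∀ n, 0 ≤ q s n) ∧ ∑ n, q s n = 1)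
    (hqrec : ∀ s j, q s j = ∑ i, q (s + 1) i * A s i j)
    (C ρ : ℝ) (hC : 0 < C) (hρ : ρ ∈ Set.Ioo (0:ℝ) 1)
    (hgeo : ∀ k s : ℕ, s ≤ k → ∀ i j,
      |backProd A k s i j - q s j| ≤ C * ρ ^ (k - s))
    (a : ℕ → ℝ) (ha : ∀ k, 0 < a k) (ha0 : Tendsto a atTop (nhds 0))
    (d : ℕ → Fin N → ℝ) (D : ℝ) (hd : ∀ k i, |d k i| ≤ D)
    (z : ℕ → Fin N → ℝ)
    (hz : ∀ k, z (k + 1) = A k *ᵥ z k - a k • d k) :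
    Tendsto (fun k => z k - (fun _ : Fin N => ∑ i, q k i * z k i))
      atTop (nhds 0) := by
  set e : ℕ → Fin N → ℝ := fun k => z k - (fun _ : Fin N => ∑ i, q k i * z k i) with he
  set w : ℕ → Fin N → ℝ := fun k i => (∑ j, q (k+1) j * d k j) - d k i with hwdef
  -- recursion for e
  have hrec : ∀ k, e (k+1) = A k *ᵥ e k + a k • w k := by
    intro k
    funext i
    have hz' := hz k
    have hzk : ∀ i, z (k+1) i = (∑ j, A k i j * z k j) - a k * d k i := by
      intro i; rw [hz']; simp [mulVec, dotProduct]
    have hqz : ∑ j, q (k+1) j * z (k+1) j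
        = (∑ l, q k l * z k l) - a k * ∑ j, q (k+1) j * d k j := by
      have : ∀ j, q (k+1) j * z (k+1) j
          = (∑ l, q (k+1) j * (A k j l * z k l)) - q (k+1) j * (a k * d k j) := by
        intro j
        rw [hzk j, mul_sub, Finset.mul_sum]
      rw [Finset.sum_congr rfl (fun j _ => this j), Finset.sum_sub_distrib]
      congr 1
      · rw [Finset.sum_comm]
        refine Finset.sum_congr rfl (fun l _ => ?_)
        rw [hqrec k l, Finset.sum_mul]
        refine Finset.sum_congr rfl (fun j _ => ?_)
        ring
      · rw [Finset.mul_sum]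
        exact Finset.sum_congr rfl (fun j _ => by ring)
    have hAe : (A k *ᵥ e k) i = (∑ j, A k i j * z k j) - (∑ l, q k l * z k l) := by
      simp only [he, mulVec, dotProduct, Pi.sub_apply, mul_sub, Finset.sum_sub_distrib]
      congr 1
      rw [← Finset.sum_mul, hrow k i, one_mul]
    show z (k+1) i - (∑ j, q (k+1) j * z (k+1) j) = _
    rw [hzk i, hqz]
    simp only [Pi.add_apply, Pi.smul_apply, smul_eq_mul, hAe, hwdef]
    ring
  obtain ⟨hρ0, hρ1⟩ := hρ
  have hD : 0 ≤ D := le_trans (abs_nonneg _) (hd 0 ⟨0, hN⟩)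
  have hqe : ∀ k, ∑ j, q k j * e k j = 0 := by
    intro k
    simp only [he, Pi.sub_apply, mul_sub, Finset.sum_sub_distrib, ← Finset.sum_mul, (hq k).2,
      one_mul, sub_self]
  have hqw : ∀ k, ∑ j, q (k+1) j * w k j = 0 := by
    intro k
    simp only [hwdef, mul_sub, Finset.sum_sub_distrib, ← Finset.sum_mul, (hq (k+1)).2,
      one_mul, sub_self]
  have hw2 : ∀ k i, |w k i| ≤ 2 * D := by
    intro k i
    have h1 : |∑ j, q (k+1) j * d k j| ≤ D := by
      calc |∑ j, q (k+1) j * d k j| ≤ ∑ j, |q (k+1) j * d k j| :=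
            Finset.abs_sum_le_sum_abs _ _
        _ ≤ ∑ j : Fin N, q (k+1) j * D := by
            refine Finset.sum_le_sum (fun j _ => ?_)
            rw [abs_mul, abs_of_nonneg ((hq (k+1)).1 j)]
            exact mul_le_mul_of_nonneg_left (hd k j) ((hq (k+1)).1 j)
        _ = D := by rw [← Finset.sum_mul, (hq (k+1)).2, one_mul]
    calc |w k i| ≤ |∑ j, q (k+1) j * d k j| + |d k i| := abs_sub _ _
      _ ≤ D + D := add_le_add h1 (hd k i)
      _ = 2 * D := by ring
  -- unrolled recursion
  have hunroll : ∀ s m, e (s+m+1) = backProd A (s+m) s *ᵥ e s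
      + ∑ t ∈ Finset.range (m+1), a (s+t) • (backProd A (s+m) (s+t+1) *ᵥ w (s+t)) := by
    intro s m
    induction m with
    | zero =>
      simp only [Nat.add_zero, zero_add, add_zero, Finset.range_one, Finset.sum_singleton,
        backProd_self, backProd_empty, Matrix.one_mulVec]
      exact hrec s
    | succ m ih =>
      have harr : ∀ x : ℕ, s + (x + 1) = s + x + 1 := fun x => by omega
      simp only [harr]
      rw [hrec (s+m+1), ih, Matrix.mulVec_add]
      have h2 : A (s+m+1) *ᵥ (∑ t ∈ Finset.range (m+1),
          a (s+t) • (backProd A (s+m) (s+t+1) *ᵥ w (s+t)))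
          = ∑ t ∈ Finset.range (m+1),
            a (s+t) • (backProd A (s+m+1) (s+t+1) *ᵥ w (s+t)) := by
        rw [← Matrix.mulVecLin_apply, map_sum]
        refine Finset.sum_congr rfl (fun t ht => ?_)
        rw [Matrix.mulVecLin_apply, Matrix.mulVec_smul, Matrix.mulVec_mulVec,
          ← backProd_succ A (s+m) (s+t+1) (by simp at ht; omega)]
      rw [h2, Matrix.mulVec_mulVec, ← backProd_succ A (s+m) s (by omega),
        Finset.sum_range_succ _ (m+1)]
      simp only [harr]
      rw [backProd_empty, Matrix.one_mulVec]
      abel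
  have hkey : ∀ k s, s ≤ k → ∀ v : Fin N → ℝ, (∑ j, q s j * v j) = 0 → ∀ i,
      |(backProd A k s *ᵥ v) i| ≤ C * ρ ^ (k - s) * ∑ j, |v j| := by
    intro k s hs v hv i
    have h1 : (backProd A k s *ᵥ v) i = ∑ j, (backProd A k s i j - q s j) * v j := by
      simp [mulVec, dotProduct, sub_mul, Finset.sum_sub_distrib, hv]
    rw [h1]
    calc |∑ j, (backProd A k s i j - q s j) * v j|
        ≤ ∑ j, |(backProd A k s i j - q s j) * v j| := Finset.abs_sum_le_sum_abs _ _
      _ ≤ ∑ j, C * ρ ^ (k-s) * |v j| := Finset.sum_le_sum fun j _ => by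
          rw [abs_mul]
          exact mul_le_mul_of_nonneg_right (hgeo k s hs i j) (abs_nonneg _)
      _ = C * ρ ^ (k-s) * ∑ j, |v j| := by rw [Finset.mul_sum]
  have hWsum : ∀ t, ∑ j, |w t j| ≤ N * (2*D) := by
    intro t
    calc ∑ j, |w t j| ≤ ∑ _j : Fin N, 2*D := Finset.sum_le_sum fun j _ => hw2 t j
      _ = N * (2*D) := by
          rw [Finset.sum_const, Finset.card_univ, Fintype.card_fin, nsmul_eq_mul]
  have hbound : ∀ s m i, |e (s+m+1) i| ≤ C * ρ ^ m * (∑ j, |e s j|)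
      + ((∑ t ∈ Finset.range m, a (s+t) * (C * ρ ^ (m-1-t) * (N*(2*D))))
      + a (s+m) * (2*D)) := by
    intro s m i
    have hx := congrFun (hunroll s m) i
    rw [Finset.sum_range_succ] at hx
    simp only [Pi.add_apply, Pi.smul_apply, smul_eq_mul, backProd_empty, Matrix.one_mulVec,
      Finset.sum_apply] at hx
    rw [hx]
    have h1 : |(backProd A (s+m) s *ᵥ e s) i| ≤ C * ρ ^ m * ∑ j, |e s j| := by
      have := hkey (s+m) s (by omega) (e s) (hqe s) i
      rwa [Nat.add_sub_cancel_left] at this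
    have h2 : ∀ t ∈ Finset.range m,
        |a (s+t) * (backProd A (s+m) (s+t+1) *ᵥ w (s+t)) i|
          ≤ a (s+t) * (C * ρ ^ (m-1-t) * (N*(2*D))) := by
      intro t ht
      simp only [Finset.mem_range] at ht
      rw [abs_mul, abs_of_pos (ha (s+t))]
      refine mul_le_mul_of_nonneg_left ?_ (le_of_lt (ha (s+t)))
      have hb := hkey (s+m) (s+t+1) (by omega) (w (s+t)) (hqw (s+t)) i
      have hexp : s + m - (s+t+1) = m - 1 - t := by omega
      rw [hexp] at hb
      refine hb.trans ?_
      exact mul_le_mul_of_nonneg_left (hWsum (s+t))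
        (mul_nonneg (le_of_lt hC) (pow_nonneg (le_of_lt hρ0) _))
    have h3 : |a (s+m) * w (s+m) i| ≤ a (s+m) * (2*D) := by
      rw [abs_mul, abs_of_pos (ha (s+m))]
      exact mul_le_mul_of_nonneg_left (hw2 (s+m) i) (le_of_lt (ha (s+m)))
    calc |(backProd A (s+m) s *ᵥ e s) i
          + (∑ t ∈ Finset.range m, a (s+t) * (backProd A (s+m) (s+t+1) *ᵥ w (s+t)) i
            + a (s+m) * w (s+m) i)|
        ≤ |(backProd A (s+m) s *ᵥ e s) i|
          + (|∑ t ∈ Finset.range m, a (s+t) * (backProd A (s+m) (s+t+1) *ᵥ w (s+t)) i|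
            + |a (s+m) * w (s+m) i|) :=
          (abs_add_le _ _).trans (by gcongr; exact abs_add_le _ _)
      _ ≤ C * ρ ^ m * (∑ j, |e s j|)
          + ((∑ t ∈ Finset.range m, a (s+t) * (C * ρ ^ (m-1-t) * (N*(2*D))))
            + a (s+m) * (2*D)) := by
          refine add_le_add h1 (add_le_add ?_ h3)
          exact (Finset.abs_sum_le_sum_abs _ _).trans (Finset.sum_le_sum h2)
  -- final limit argument
  rw [Metric.tendsto_atTop]
  intro ε hε
  set K := C * (N * (2*D)) with hKdef
  have hK : 0 ≤ K := by positivity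
  have h1ρ : 0 < 1 - ρ := by linarith
  set δ := min (ε * (1-ρ) / (3*(K+1))) (ε / (3*(2*D+1))) with hδdef
  have hδ : 0 < δ := lt_min (by positivity) (by positivity)
  obtain ⟨s, hs⟩ : ∃ s, ∀ t ≥ s, a t < δ := by
    obtain ⟨s, hs⟩ := Metric.tendsto_atTop.mp ha0 δ hδ
    exact ⟨s, fun t ht => by
      have := hs t ht
      rwa [Real.dist_eq, sub_zero, abs_of_pos (ha t)] at this⟩
  have hpow : Tendsto (fun m => C * ρ ^ m * (∑ j, |e s j|)) atTop (nhds 0) := by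
    have h0 := tendsto_pow_atTop_nhds_zero_of_lt_one (le_of_lt hρ0) hρ1
    simpa using (h0.const_mul C).mul_const (∑ j, |e s j|)
  obtain ⟨M, hM⟩ := Metric.tendsto_atTop.mp hpow (ε/3) (by positivity)
  refine ⟨s + M + 1, fun k hk => ?_⟩
  set m := k - s - 1 with hm
  have hkform : k = s + m + 1 := by omega
  have hmM : M ≤ m := by omega
  have hesum : (0:ℝ) ≤ ∑ j, |e s j| := Finset.sum_nonneg fun j _ => abs_nonneg _
  have h1 : C * ρ ^ m * (∑ j, |e s j|) < ε/3 := by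
    have := hM m hmM
    rwa [Real.dist_eq, sub_zero, abs_of_nonneg (by positivity)] at this
  have h2 : (∑ t ∈ Finset.range m, a (s+t) * (C * ρ ^ (m-1-t) * (N*(2*D)))) ≤ ε/3 := by
    have hsum : ∑ t ∈ Finset.range m, a (s+t) * (C * ρ^(m-1-t) * (N*(2*D)))
        ≤ ∑ t ∈ Finset.range m, δ * K * ρ^(m-1-t) := by
      refine Finset.sum_le_sum fun t ht => ?_
      have ha' : a (s+t) ≤ δ := le_of_lt (hs (s+t) (by omega))
      calc a (s+t) * (C * ρ^(m-1-t) * (N*(2*D)))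
          ≤ δ * (C * ρ^(m-1-t) * (N*(2*D))) :=
            mul_le_mul_of_nonneg_right ha' (by positivity)
        _ = δ * K * ρ^(m-1-t) := by rw [hKdef]; ring
    have hgeom : ∑ t ∈ Finset.range m, δ * K * ρ^(m-1-t)
        = δ * K * ∑ t ∈ Finset.range m, ρ^(m-1-t) := by rw [Finset.mul_sum]
    have hreflect : ∑ t ∈ Finset.range m, ρ^(m-1-t) = ∑ t ∈ Finset.range m, ρ^t :=
      Finset.sum_range_reflect (fun t => ρ^t) m
    have hgs : ∑ t ∈ Finset.range m, ρ^t ≤ 1/(1-ρ) := by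
      rw [geom_sum_eq (ne_of_lt hρ1)]
      have heq : (ρ^m - 1)/(ρ - 1) = (1 - ρ^m)/(1-ρ) := by
        rw [div_eq_div_iff (by linarith) h1ρ.ne']
        ring
      rw [heq]
      apply div_le_div₀ (by norm_num) (by nlinarith [pow_nonneg (le_of_lt hρ0) m]) h1ρ le_rfl
    have hfin : δ * K * (1/(1-ρ)) ≤ ε/3 := by
      rw [mul_one_div, div_le_iff₀ h1ρ]
      have hδ1 : δ ≤ ε * (1-ρ) / (3*(K+1)) := min_le_left _ _
      have : δ * K ≤ (ε * (1-ρ) / (3*(K+1))) * K :=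
        mul_le_mul_of_nonneg_right hδ1 hK
      refine this.trans ?_
      rw [div_mul_eq_mul_div, div_le_iff₀ (by positivity)]
      nlinarith [mul_pos hε h1ρ]
    calc ∑ t ∈ Finset.range m, a (s+t) * (C * ρ^(m-1-t) * (N*(2*D)))
        ≤ δ * K * ∑ t ∈ Finset.range m, ρ^(m-1-t) := by rw [← hgeom]; exact hsum
      _ = δ * K * ∑ t ∈ Finset.range m, ρ^t := by rw [hreflect]
      _ ≤ δ * K * (1/(1-ρ)) :=
          mul_le_mul_of_nonneg_left hgs (mul_nonneg (le_of_lt hδ) hK)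
      _ ≤ ε/3 := hfin
  have h3 : a (s+m) * (2*D) < ε/3 := by
    have haδ : a (s+m) < δ := hs (s+m) (by omega)
    have hδ2 : δ ≤ ε / (3*(2*D+1)) := min_le_right _ _
    have hq1 : a (s+m) * (2*D) ≤ δ * (2*D) :=
      mul_le_mul_of_nonneg_right (le_of_lt haδ) (by positivity)
    have hq2 : δ * (2*D+1) ≤ ε/3 := by
      refine (mul_le_mul_of_nonneg_right hδ2 (by positivity)).trans ?_
      rw [div_mul_eq_mul_div, div_le_div_iff₀ (by positivity) (by norm_num)]
      ring_nf
      nlinarith [hε, hD]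
    nlinarith [hδ, hD]
  rw [dist_pi_lt_iff hε]
  intro i
  rw [Real.dist_eq, Pi.zero_apply, sub_zero, hkform]
  calc |e (s+m+1) i| ≤ C * ρ ^ m * (∑ j, |e s j|)
      + ((∑ t ∈ Finset.range m, a (s+t) * (C * ρ ^ (m-1-t) * (N*(2*D))))
      + a (s+m) * (2*D)) := hbound s m i
    _ < ε := by linarith
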